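/- arXiv:2605.00442 — 3 statements merged into one kernel-verified Lean document; each statement's English description precedes it below -/
import Mathlib

section
/- Let N > 1 be a natural number, M₁ = N + 2, r < 0, k ∈ (-1/M₁, 1/M₁), 0 < k₁ < 1, and k₂ ≥ 4π. Define F(x) = x²e^{r-x} + k₀ + k·x·cos(πk₁x/(1+k₂)) - x. Then F'(x) < 0 for all x ∈ [0, M₁]. -/
set_option maxHeartbeats 1000000


open Real

theorem stmt2 (N : ℕ) (hN : 1 < N) (M₁ r k₀ k k₁ k₂ : ℝ)
    (hM₁ : M₁ = (N : ℝ) + 2) (hr : r < 0)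
    (hk : -1 / M₁ < k ∧ k < 1 / M₁) (hk₁ : 0 < k₁ ∧ k₁ < 1) (hk₂ : k₂ ≥ 4 * π)
    (F : ℝ → ℝ)
    (hF : ∀ x, F x = x ^ 2 * exp (r - x) + k₀ + k * x * cos (π * k₁ * x / (1 + k₂)) - x) :
    ∀ x ∈ Set.Icc (0 : ℝ) M₁, deriv F x < 0 := by
  have hFeq : F = fun x : ℝ =>
      x ^ 2 * exp (r - x) + k₀ + k * x * cos (π * k₁ * x / (1 + k₂)) - x := funext hF
  have hpi : (0 : ℝ) < π := Real.pi_pos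
  have hk₂' : (0 : ℝ) < 1 + k₂ := by nlinarith
  have hM₁4 : (4 : ℝ) ≤ M₁ := by
    rw [hM₁]
    have : (2 : ℝ) ≤ (N : ℝ) := by exact_mod_cast hN
    linarith
  have hM₁pos : (0 : ℝ) < M₁ := by linarith
  have hkabs : |k| < 1 / M₁ := abs_lt.2 ⟨by linarith [hk.1, (by rw [neg_div] : -1/M₁ = -(1/M₁))] , hk.2⟩
  intro x hx
  obtain ⟨hx0, hxM⟩ := hx
  -- derivative computation
  have hθ : HasDerivAt (fun x : ℝ => π * k₁ * x / (1 + k₂)) (π * k₁ * 1 / (1 + k₂)) x :=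
    ((hasDerivAt_id x).const_mul (π * k₁)).div_const (1 + k₂)
  have hcos : HasDerivAt (fun x : ℝ => cos (π * k₁ * x / (1 + k₂)))
      (-sin (π * k₁ * x / (1 + k₂)) * (π * k₁ * 1 / (1 + k₂))) x :=
    (Real.hasDerivAt_cos _).comp x hθ
  have hexp : HasDerivAt (fun x : ℝ => exp (r - x)) (exp (r - x) * (0 - 1)) x :=
    (Real.hasDerivAt_exp _).comp x ((hasDerivAt_const x r).sub (hasDerivAt_id x))
  have hpow : HasDerivAt (fun x : ℝ => x ^ 2) (2 * x ^ 1) x := by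
    simpa using hasDerivAt_pow 2 x
  have hkx : HasDerivAt (fun x : ℝ => k * x) (k * 1) x := (hasDerivAt_id x).const_mul k
  have hD : HasDerivAt F
      ((2 * x ^ 1 * exp (r - x) + x ^ 2 * (exp (r - x) * (0 - 1)))
        + (k * 1 * cos (π * k₁ * x / (1 + k₂))
            + k * x * (-sin (π * k₁ * x / (1 + k₂)) * (π * k₁ * 1 / (1 + k₂)))) - 1) x := by
    rw [hFeq]
    exact (((hpow.mul hexp).add_const k₀).add (hkx.mul hcos)).sub (hasDerivAt_id x)
  rw [hD.deriv]
  set θ := π * k₁ * x / (1 + k₂) with hθdef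
  set c := π * k₁ * 1 / (1 + k₂) with hcdef
  have hcpos : 0 < c := by
    apply div_pos _ hk₂'
    nlinarith [hk₁.1]
  have hc4 : c < 1 / 4 := by
    rw [hcdef, div_lt_div_iff₀ hk₂' (by norm_num)]
    nlinarith [hk₁.1, hk₁.2]
  -- bound A
  have hexppos : 0 < exp (r - x) := exp_pos _
  have hA : 2 * x ^ 1 * exp (r - x) + x ^ 2 * (exp (r - x) * (0 - 1)) < 1 / 2 := by
    have heq : 2 * x ^ 1 * exp (r - x) + x ^ 2 * (exp (r - x) * (0 - 1))
        = (2 * x - x ^ 2) * exp (r - x) := by ring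
    rw [heq]
    rcases le_or_gt (2 * x - x ^ 2) 0 with h | h
    · nlinarith
    · have h1 : exp (r - x) < exp (-x) := exp_lt_exp.2 (by linarith)
      have h2 : (1 + x / 2) ^ 2 ≤ exp x := by
        have := Real.add_one_le_exp (x / 2)
        have h3 : exp (x / 2) ^ 2 = exp x := by
          rw [sq, ← Real.exp_add]; ring_nf
        nlinarith [Real.exp_pos (x / 2), this]
      have h4 : exp (-x) = 1 / exp x := by rw [Real.exp_neg]; ring
      have h5 : exp (-x) ≤ 1 / (1 + x / 2) ^ 2 := by
        rw [h4]
        apply one_div_le_one_div_of_le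
        · nlinarith
        · exact h2
      have h6 : (2 * x - x ^ 2) * exp (-x) ≤ (2 * x - x ^ 2) * (1 / (1 + x / 2) ^ 2) :=
        mul_le_mul_of_nonneg_left h5 (le_of_lt h)
      have hden : (0:ℝ) < (1 + x / 2) ^ 2 := by nlinarith
      have h7 : (2 * x - x ^ 2) * (1 / (1 + x / 2) ^ 2) ≤ 1 / 2 := by
        rw [mul_one_div, div_le_iff₀ hden]
        nlinarith [sq_nonneg (3 * x - 2)]
      nlinarith
  -- bound B
  have hB : k * 1 * cos θ < 1 / 4 := by
    have h1 : |k * 1 * cos θ| ≤ |k| := by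
      rw [mul_one, abs_mul]
      nlinarith [abs_cos_le_one θ, abs_nonneg k, abs_nonneg (cos θ)]
    have h2 : (1 : ℝ) / M₁ ≤ 1 / 4 := by
      apply one_div_le_one_div_of_le <;> linarith
    calc k * 1 * cos θ ≤ |k * 1 * cos θ| := le_abs_self _
      _ ≤ |k| := h1
      _ < 1 / M₁ := hkabs
      _ ≤ 1 / 4 := h2
  -- bound C
  have hC : k * x * (-sin θ * c) ≤ 1 / 4 := by
    have h1 : |k * x * (-sin θ * c)| ≤ 1 / 4 := by
      rw [abs_mul, abs_mul, abs_mul, abs_neg]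
      have hkx : |k| * |x| ≤ 1 := by
        have : |x| = x := abs_of_nonneg hx0
        rw [this]
        calc |k| * x ≤ (1 / M₁) * M₁ := by
              apply mul_le_mul (le_of_lt hkabs) hxM hx0 (le_of_lt (by positivity))
          _ = 1 := by field_simp
      have hs : |sin θ| ≤ 1 := abs_sin_le_one θ
      have hcc : |c| ≤ 1 / 4 := by rw [abs_of_pos hcpos]; linarith
      calc |k| * |x| * (|sin θ| * |c|) ≤ 1 * (1 * (1 / 4)) := by
            apply mul_le_mul hkx
            · apply mul_le_mul hs hcc (abs_nonneg c) (by norm_num)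
            · positivity
            · norm_num
        _ = 1 / 4 := by norm_num
    calc k * x * (-sin θ * c) ≤ |k * x * (-sin θ * c)| := le_abs_self _
      _ ≤ 1 / 4 := h1
  linarith
end

section
/- Let N > 1 be a natural number, M₁ = N + 2, 0 < k₀ < N, r < 0, k ∈ (-1/M₁, 1/M₁), 0 < k₁ < 1, and k₂ ≥ 4π. Then the function F(x) = x²e^{r-x} + k₀ + k·x·cos(πk₁x/(1+k₂)) - x has exactly one root in the interval [0, M₁]. -/
set_option maxHeartbeats 1000000


open Real

theorem stmt3 (N : ℕ) (hN : 1 < N) (M₁ r k₀ k k₁ k₂ : ℝ)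
    (hM₁ : M₁ = (N : ℝ) + 2) (hk₀ : 0 < k₀ ∧ k₀ < N) (hr : r < 0)
    (hk : -1 / M₁ < k ∧ k < 1 / M₁) (hk₁ : 0 < k₁ ∧ k₁ < 1) (hk₂ : k₂ ≥ 4 * π)
    (F : ℝ → ℝ)
    (hF : ∀ x, F x = x ^ 2 * exp (r - x) + k₀ + k * x * cos (π * k₁ * x / (1 + k₂)) - x) :
    ∃! x, x ∈ Set.Icc (0 : ℝ) M₁ ∧ F x = 0 := by
  have hπ : 0 < π := Real.pi_pos
  have hNn : (2 : ℝ) ≤ (N : ℝ) := by exact_mod_cast hN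
  have hM4 : (4 : ℝ) ≤ M₁ := by rw [hM₁]; linarith
  have hM0 : 0 < M₁ := by linarith
  have hk2 : 0 < 1 + k₂ := by nlinarith
  set θ : ℝ := π * k₁ / (1 + k₂) with hθdef
  have hθpos : 0 < θ := div_pos (mul_pos hπ hk₁.1) hk2
  have hθlt : θ < 1 / 4 := by
    rw [hθdef, div_lt_div_iff₀ hk2 (by norm_num)]
    nlinarith [hk₁.2, hk₂]
  have hkabs : |k| < 1 / M₁ := by
    rw [abs_lt]
    constructor
    · rw [← neg_div]; exact hk.1
    · exact hk.2
  have hkM : |k| * M₁ < 1 := (lt_div_iff₀ hM0).mp hkabs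
  have hFθ : ∀ x, π * k₁ * x / (1 + k₂) = θ * x := by
    intro x; rw [hθdef]; ring
  -- derivative
  have hderiv : ∀ x : ℝ, HasDerivAt
      (fun x => x ^ 2 * exp (r - x) + k₀ + k * x * cos (π * k₁ * x / (1 + k₂)) - x)
      ((2 * x - x ^ 2) * exp (r - x) + (k * cos (θ * x) - k * x * (θ * sin (θ * x))) - 1) x := by
    intro x
    have h1 : HasDerivAt (fun x : ℝ => x ^ 2) (2 * x) x := by
      simpa using hasDerivAt_pow 2 x
    have h2 : HasDerivAt (fun x : ℝ => exp (r - x)) (-exp (r - x)) x := by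
      have : HasDerivAt (fun x : ℝ => r - x) (-1) x := by
        simpa using (hasDerivAt_id x).const_sub r
      simpa using this.exp
    have h3 : HasDerivAt (fun x : ℝ => cos (π * k₁ * x / (1 + k₂))) (-(θ * sin (θ * x))) x := by
      have hlin : HasDerivAt (fun x : ℝ => π * k₁ * x / (1 + k₂)) θ x := by
        have h := ((hasDerivAt_id x).const_mul (π * k₁)).div_const (1 + k₂)
        simpa [hθdef] using h
      have h := hlin.cos
      rw [hFθ x] at h
      convert h using 1
      ring
    have h4 : HasDerivAt (fun x : ℝ => k * x) k x := by
      simpa using (hasDerivAt_id x).const_mul k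
    have := ((h1.mul h2).add_const k₀).add ((h4.mul h3)) |>.sub (hasDerivAt_id x)
    refine this.congr_deriv ?_
    rw [hFθ x]
    ring
  -- strict antitone
  have hanti : StrictAntiOn
      (fun x => x ^ 2 * exp (r - x) + k₀ + k * x * cos (π * k₁ * x / (1 + k₂)) - x)
      (Set.Icc 0 M₁) := by
    apply strictAntiOn_of_deriv_neg (convex_Icc 0 M₁)
    · exact fun x _ => (hderiv x).continuousAt.continuousWithinAt
    · intro x hx
      rw [interior_Icc] at hx
      rw [(hderiv x).deriv]
      have hx0 : 0 < x := hx.1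
      have hxM : x < M₁ := hx.2
      -- bound A
      have hA : (2 * x - x ^ 2) * exp (r - x) ≤ 1 / 2 := by
        rcases le_or_gt (2 * x - x ^ 2) 0 with h | h
        · have := exp_pos (r - x)
          nlinarith
        · have he1 : exp (r - x) ≤ exp (-x) := exp_le_exp.2 (by linarith)
          have he2 : exp (-x) * exp x = 1 := by rw [← exp_add]; simp
          have he3 : (1 + x / 2) ^ 2 ≤ exp x := by
            have h5 : x / 2 + 1 ≤ exp (x / 2) := add_one_le_exp (x / 2)
            have h6 : exp (x / 2) * exp (x / 2) = exp x := by rw [← exp_add]; ring_nf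
            nlinarith [exp_pos (x / 2)]
          have hEpos : 0 < exp (-x) := exp_pos _
          have hq : 2 * (2 * x - x ^ 2) ≤ (1 + x / 2) ^ 2 := by nlinarith [sq_nonneg (3 * x - 2)]
          have hm : 2 * (2 * x - x ^ 2) * exp (-x) ≤ (1 + x / 2) ^ 2 * exp (-x) :=
            mul_le_mul_of_nonneg_right hq hEpos.le
          have hc' : (1 + x / 2) ^ 2 * exp (-x) ≤ 1 := by
            have := mul_le_mul_of_nonneg_right he3 hEpos.le
            nlinarith
          have key : (2 * x - x ^ 2) * exp (-x) ≤ 1 / 2 := by linarith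
          have hm2 : (2 * x - x ^ 2) * exp (r - x) ≤ (2 * x - x ^ 2) * exp (-x) :=
            mul_le_mul_of_nonneg_left he1 h.le
          linarith
      -- bound B
      have hB : k * cos (θ * x) < 1 / 4 := by
        have h1 : k * cos (θ * x) ≤ |k * cos (θ * x)| := le_abs_self _
        have h2 : |k * cos (θ * x)| ≤ |k| := by
          rw [abs_mul]
          nlinarith [abs_cos_le_one (θ * x), abs_nonneg k]
        have h3 : |k| < 1 / 4 := lt_of_lt_of_le hkabs (by
          rw [div_le_div_iff₀ hM0 (by norm_num)]; linarith)
        linarith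
      -- bound C
      have hC : -(k * x * (θ * sin (θ * x))) ≤ 1 / 4 := by
        have h2 : |k * x * (θ * sin (θ * x))| ≤ (1 / M₁) * M₁ * (θ * 1) := by
          rw [abs_mul, abs_mul, abs_mul, abs_of_pos hθpos]
          gcongr
          all_goals first
            | exact hkabs.le
            | (rw [abs_of_pos hx0]; exact hxM.le)
            | exact abs_sin_le_one _
        have h3 : (1 / M₁) * M₁ * (θ * 1) = θ := by field_simp
        linarith [neg_abs_le (k * x * (θ * sin (θ * x)))]
      linarith
  -- endpoint values
  have hF0 : (0:ℝ) ^ 2 * exp (r - 0) + k₀ + k * 0 * cos (π * k₁ * 0 / (1 + k₂)) - 0 = k₀ := by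
    norm_num
  have hFM : M₁ ^ 2 * exp (r - M₁) + k₀ + k * M₁ * cos (π * k₁ * M₁ / (1 + k₂)) - M₁ < 0 := by
    have he3 : (1 + M₁ / 4) ^ 2 ≤ exp (M₁ / 2) := by
      have h5 : M₁ / 4 + 1 ≤ exp (M₁ / 4) := add_one_le_exp (M₁ / 4)
      have h6 : exp (M₁ / 4) * exp (M₁ / 4) = exp (M₁ / 2) := by rw [← exp_add]; ring_nf
      nlinarith [exp_pos (M₁ / 4)]
    have he4 : M₁ ^ 2 ≤ exp M₁ := by
      have h6 : exp (M₁ / 2) * exp (M₁ / 2) = exp M₁ := by rw [← exp_add]; ring_nf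
      have hsq : M₁ ≤ (1 + M₁ / 4) ^ 2 := by nlinarith [sq_nonneg (1 - M₁ / 4)]
      nlinarith [exp_pos (M₁ / 2)]
    have he5 : exp (r - M₁) < exp (-M₁) := exp_lt_exp.2 (by linarith)
    have he2 : exp (-M₁) * exp M₁ = 1 := by rw [← exp_add]; simp
    have e1 : M₁ ^ 2 * exp (r - M₁) < 1 := by
      have : M₁ ^ 2 * exp (r - M₁) < M₁ ^ 2 * exp (-M₁) :=
        mul_lt_mul_of_pos_left he5 (pow_pos hM0 2)
      nlinarith [exp_pos (-M₁)]
    have e2 : k * M₁ * cos (π * k₁ * M₁ / (1 + k₂)) < 1 := by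
      have h1 : k * M₁ * cos (π * k₁ * M₁ / (1 + k₂)) ≤ |k * M₁ * cos (π * k₁ * M₁ / (1 + k₂))| :=
        le_abs_self _
      have h2 : |k * M₁ * cos (π * k₁ * M₁ / (1 + k₂))| ≤ |k| * M₁ * 1 := by
        rw [abs_mul, abs_mul, abs_of_pos hM0]
        gcongr
        · exact abs_cos_le_one _
      have hk0N : k₀ < (N:ℝ) := hk₀.2
      linarith
    have hk0N : k₀ < (N:ℝ) := hk₀.2
    have : k₀ < M₁ - 2 := by rw [hM₁]; linarith
    linarith
  -- existence via IVT
  set G : ℝ → ℝ := fun x => x ^ 2 * exp (r - x) + k₀ + k * x * cos (π * k₁ * x / (1 + k₂)) - x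
    with hG
  have hGcont : ContinuousOn G (Set.Icc 0 M₁) :=
    fun x _ => (hderiv x).continuousAt.continuousWithinAt
  have hG0 : G 0 = k₀ := hF0
  have hGM : G M₁ < 0 := hFM
  have hmem : (0:ℝ) ∈ Set.Icc (G M₁) (G 0) := by
    constructor
    · exact hGM.le
    · rw [hG0]; exact hk₀.1.le
  obtain ⟨c, hc, hGc⟩ := intermediate_value_Icc' hM0.le hGcont hmem
  refine ⟨c, ⟨hc, (hF c).trans hGc⟩, ?_⟩
  intro y hy
  have hyG : G y = 0 := (show G y = F y from (hF y).symm).trans hy.2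
  by_contra hne
  rcases lt_or_gt_of_ne hne with h | h
  · have := hanti hy.1 hc h
    rw [hyG, hGc] at this
    exact lt_irrefl 0 this
  · have := hanti hc hy.1 h
    rw [hyG, hGc] at this
    exact lt_irrefl 0 this
end

section
/- Let N > 1, M₁ = N + 2, M₂ = k₁M₁/(1+k₂), 0 < k₀ < N, r < 0, k ∈ (-1/M₁, 1/M₁), 0 < k₁ < 1, and k₂ ≥ 4π. Then the map M_{r,k}(x,φ) = (x²e^{r-x} + k₀ + kx cos(πφ), k₁x - k₂φ) has a unique fixed point (x*, φ*) in [0, M₁] × [0, M₂] with x* > 0. -/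
open Real
set_option maxHeartbeats 1000000

theorem stmt4 (N : ℕ) (hN : 1 < N) (M₁ M₂ r k₀ k k₁ k₂ : ℝ)
    (hM₁ : M₁ = (N : ℝ) + 2) (hM₂ : M₂ = k₁ * M₁ / (1 + k₂))
    (hk₀ : 0 < k₀ ∧ k₀ < N) (hr : r < 0)
    (hk : -1 / M₁ < k ∧ k < 1 / M₁) (hk₁ : 0 < k₁ ∧ k₁ < 1) (hk₂ : k₂ ≥ 4 * π)
    (M : ℝ × ℝ → ℝ × ℝ)
    (hM : ∀ p : ℝ × ℝ, M p =
      (p.1 ^ 2 * exp (r - p.1) + k₀ + k * p.1 * cos (π * p.2), k₁ * p.1 - k₂ * p.2)) :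
    ∃! p : ℝ × ℝ, p ∈ Set.Icc (0 : ℝ) M₁ ×ˢ Set.Icc (0 : ℝ) M₂ ∧ M p = p ∧ 0 < p.1 := by
  obtain ⟨hk₀0, hk₀N⟩ := hk₀
  obtain ⟨hkl, hku⟩ := hk
  obtain ⟨hk₁0, hk₁1⟩ := hk₁
  have hπ3 : (3:ℝ) < π := Real.pi_gt_three
  have hN2 : (2:ℝ) ≤ N := by exact_mod_cast hN
  have hM₁4 : (4:ℝ) ≤ M₁ := by rw [hM₁]; linarith
  have hM₁0 : 0 < M₁ := by linarith
  have hk₂0 : 0 < 1 + k₂ := by nlinarith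
  set c := π * k₁ / (1 + k₂) with hc
  have hc0 : 0 < c := div_pos (mul_pos Real.pi_pos hk₁0) hk₂0
  have hc14 : c < 1/4 := by
    rw [hc, div_lt_iff₀ hk₂0]; nlinarith
  have hkabs1 : |k| < 1 / M₁ := by
    rw [abs_lt]
    constructor
    · have := neg_div M₁ (1:ℝ); linarith [hkl]
    · exact hku
  have hkabs : |k| * M₁ < 1 := by
    have := (lt_div_iff₀ hM₁0).mp hkabs1
    linarith
  have hk14 : |k| < 1/4 := by nlinarith [abs_nonneg k]
  -- the 1-D map
  set f : ℝ → ℝ := fun x => x^2 * exp (r - x) + k₀ + k * x * Real.cos (c * x) - x with hfdef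
  have hf0 : f 0 = k₀ := by simp [hfdef]
  have hfderiv : ∀ x : ℝ, HasDerivAt f
      ((2*x - x^2) * exp (r - x) + (k * Real.cos (c*x) - k * x * (c * Real.sin (c*x))) - 1) x := by
    intro x
    have h1 : HasDerivAt (fun x : ℝ => x^2) (2*x) x := by
      simpa using (hasDerivAt_pow 2 x)
    have h2 : HasDerivAt (fun x : ℝ => exp (r - x)) (-exp (r - x)) x := by
      have := (Real.hasDerivAt_exp (r - x)).comp x
        (((hasDerivAt_id x).const_sub r))
      simpa [Function.comp_def] using this
    have h3 : HasDerivAt (fun x : ℝ => Real.cos (c * x)) (-Real.sin (c*x) * c) x := by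
      have := (Real.hasDerivAt_cos (c*x)).comp x ((hasDerivAt_id x).const_mul c)
      simpa [Function.comp_def] using this
    have h4 : HasDerivAt (fun x : ℝ => k * x) k x := by
      simpa using (hasDerivAt_id x).const_mul k
    have h5 := ((h1.mul h2).add_const k₀).add (h4.mul h3)
    have h6 := h5.sub (hasDerivAt_id x)
    refine h6.congr_deriv ?_
    ring
  have hcont : Continuous f :=
    continuous_iff_continuousAt.mpr fun x => (hfderiv x).differentiableAt.continuousAt
  -- strict antitonicity on [0, M₁]
  have hanti : StrictAntiOn f (Set.Icc 0 M₁) := by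
    apply StrictAntiOn.mono (s := Set.Icc 0 M₁) ?_ le_rfl
    exact strictAntiOn_of_deriv_neg (convex_Icc 0 M₁) hcont.continuousOn (by
      intro x hx
      rw [interior_Icc] at hx
      obtain ⟨hx0, hxM⟩ := hx
      rw [(hfderiv x).deriv]
      -- term 1: (2x - x²)e^{r-x} ≤ 1/2
      have hexpx := Real.exp_pos x
      have t1 : (2*x - x^2) * exp (r - x) ≤ 1/2 := by
        rcases le_or_gt (2*x - x^2) 0 with h | h
        · nlinarith [Real.exp_pos (r - x)]
        · have e1 : exp (r - x) ≤ exp (-x) := Real.exp_le_exp.mpr (by linarith)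
          have e2 : (1 + x/2)^2 ≤ exp x := by
            have ha : 1 + x/2 ≤ exp (x/2) := by linarith [Real.add_one_le_exp (x/2)]
            have hb : exp (x/2) * exp (x/2) = exp x := by
              rw [← Real.exp_add]; ring_nf
            nlinarith [Real.exp_pos (x/2)]
          have e3 : 2*x - x^2 ≤ exp x / 2 := by nlinarith [sq_nonneg (1 - 3*x/2)]
          have e4 : exp (-x) = (exp x)⁻¹ := Real.exp_neg x
          calc (2*x - x^2) * exp (r - x) ≤ (exp x / 2) * (exp x)⁻¹ := by
                rw [← e4]
                exact mul_le_mul e3 e1 (Real.exp_pos _).le (by positivity)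
            _ = 1/2 := by field_simp
      -- term 2: k cos(cx) ≤ |k|
      have t2 : k * Real.cos (c*x) ≤ |k| := by
        calc k * Real.cos (c*x) ≤ |k * Real.cos (c*x)| := le_abs_self _
          _ = |k| * |Real.cos (c*x)| := abs_mul _ _
          _ ≤ |k| * 1 := by
              exact mul_le_mul_of_nonneg_left (Real.abs_cos_le_one _) (abs_nonneg k)
          _ = |k| := mul_one _
      -- term 3: -(k x c sin(cx)) ≤ |k| x c ≤ c
      have hkx1 : |k| * x ≤ 1 := by nlinarith [abs_nonneg k]
      have t3 : -(k * x * (c * Real.sin (c*x))) ≤ c := by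
        have ha : -(k * x * (c * Real.sin (c*x))) ≤ |k * x * (c * Real.sin (c*x))| :=
          neg_le_abs _
        have hb : |k * x * (c * Real.sin (c*x))| = |k| * x * (c * |Real.sin (c*x)|) := by
          rw [abs_mul, abs_mul, abs_mul, abs_of_nonneg hx0.le, abs_of_nonneg hc0.le]
        have hcsin : c * |Real.sin (c*x)| ≤ c :=
          mul_le_of_le_one_right hc0.le (abs_sin_le_one _)
        have hd : |k| * x * (c * |Real.sin (c*x)|) ≤ 1 * c := by
          apply mul_le_mul hkx1 hcsin (by positivity) (by norm_num)
        linarith [ha, hb ▸ ha]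
      linarith)
  -- value at M₁ is negative
  have hfM₁ : f M₁ < 0 := by
    have e1 : exp (r - M₁) < exp (-M₁) := Real.exp_lt_exp.mpr (by linarith)
    have e2 : (1 + M₁/4)^4 ≤ exp M₁ := by
      have ha := Real.add_one_le_exp (M₁/4)
      have hb : exp (M₁/4) ^ 4 = exp M₁ := by
        rw [← Real.exp_nat_mul]; push_cast; ring_nf
      have hpos : (0:ℝ) ≤ 1 + M₁/4 := by linarith
      calc (1 + M₁/4)^4 ≤ exp (M₁/4) ^ 4 := by
            apply pow_le_pow_left₀ hpos (by linarith)
        _ = exp M₁ := hb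
    have e3 : M₁^2 ≤ exp M₁ := by
      nlinarith [mul_nonneg (sq_nonneg (1 - M₁/4)) (by positivity : (0:ℝ) ≤ (1 + M₁/4)^2 + M₁)]
    have e4 : M₁^2 * exp (r - M₁) < 1 := by
      have : M₁^2 * exp (r - M₁) < M₁^2 * exp (-M₁) := by
        apply mul_lt_mul_of_pos_left e1 (by positivity)
      have e5 : exp (-M₁) = (exp M₁)⁻¹ := Real.exp_neg M₁
      have e6 : M₁^2 * exp (-M₁) ≤ 1 := by
        rw [e5]
        rw [mul_inv_le_iff₀ (Real.exp_pos M₁)]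
        linarith
      linarith
    have t2 : k * M₁ * Real.cos (c*M₁) ≤ 1 := by
      calc k * M₁ * Real.cos (c*M₁) ≤ |k * M₁ * Real.cos (c*M₁)| := le_abs_self _
        _ = |k| * M₁ * |Real.cos (c*M₁)| := by
            rw [abs_mul, abs_mul, abs_of_nonneg hM₁0.le]
        _ ≤ |k| * M₁ * 1 := by
            apply mul_le_mul_of_nonneg_left (Real.abs_cos_le_one _) (by positivity)
        _ ≤ 1 := by linarith
    simp only [hfdef]
    rw [hM₁] at e4 t2 ⊢
    linarith
  -- existence of root via IVT
  have hivt := intermediate_value_Icc' hM₁0.le hcont.continuousOn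
  have h0mem : (0:ℝ) ∈ Set.Icc (f M₁) (f 0) := ⟨hfM₁.le, by rw [hf0]; exact hk₀0.le⟩
  obtain ⟨x₀, hx₀mem, hx₀⟩ := hivt h0mem
  have hx₀pos : 0 < x₀ := by
    rcases hx₀mem.1.lt_or_eq with h | h
    · exact h
    · exfalso; rw [← h] at hx₀; rw [hf0] at hx₀; linarith
  have hφmem : k₁ * x₀ / (1 + k₂) ∈ Set.Icc (0:ℝ) M₂ := by
    constructor
    · positivity
    · rw [hM₂]; gcongr; exact hx₀mem.2
  have hπφ : ∀ y : ℝ, π * (k₁ * y / (1 + k₂)) = c * y := by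
    intro y; rw [hc]; ring
  refine ⟨(x₀, k₁ * x₀ / (1 + k₂)), ⟨⟨hx₀mem, hφmem⟩, ?_, hx₀pos⟩, ?_⟩
  · rw [hM]
    simp only [Prod.mk.injEq]
    constructor
    · rw [hπφ x₀]
      simp only [hfdef] at hx₀
      linarith
    · field_simp
      ring
  · rintro ⟨y, ψ⟩ ⟨⟨hy, hψ⟩, hfixq, hypos⟩
    rw [hM] at hfixq
    simp only [Prod.mk.injEq] at hfixq
    obtain ⟨eq1, eq2⟩ := hfixq
    have hψeq : ψ = k₁ * y / (1 + k₂) := by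
      field_simp
      linarith
    have hfy : f y = 0 := by
      simp only [hfdef]
      rw [hψeq] at eq1
      rw [hπφ y] at eq1
      linarith
    have hyx : y = x₀ := by
      apply hanti.injOn hy hx₀mem
      rw [hfy, hx₀]
    simp only [Prod.mk.injEq]
    exact ⟨hyx, by rw [hψeq, hyx]⟩
end
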